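/- Let K ⊆ ℝ³ be a nonempty compact set equal to the closure of its interior, let δ be a spin character of K, and let q ∈ ℍ satisfy q² = −1. Then the image under δ of the set 𝒜_q(K) of plane-spinor fields on K taking values in ℝ·1 + ℝ·q is exactly the plane ℝ·1 + ℝ·q. (Quaternionic form of the proposition that a spin character maps each subsurface spinor algebra 𝒜_B(M) onto the plane-spinor algebra 𝔸_B.) -/

import Mathlib

noncomputable section

abbrev R3 : Type := EuclideanSpace ℝ (Fin 3)

abbrev Quat := Quaternion ℝ

def e (m : Fin 3) : R3 := EuclideanSpace.single m 1

def qi : Quat := ⟨0, 1, 0, 0⟩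
def qj : Quat := ⟨0, 0, 1, 0⟩
def qk : Quat := ⟨0, 0, 0, 1⟩

/-- `f` is monogenic on `U`. -/
def MonogenicOn (f : R3 → Quat) (U : Set R3) : Prop :=
  ∀ x ∈ U, DifferentiableAt ℝ f x ∧
    fderiv ℝ f x (e 0) + qk * fderiv ℝ f x (e 1) + qj * fderiv ℝ f x (e 2) = 0

open Classical in
/-- Extension of a continuous map on `K` by zero. -/
def extendK (K : Set R3) (f : C(K, Quat)) : R3 → Quat :=
  fun x => if h : x ∈ K then f ⟨x, h⟩ else 0

/-- `f : C(K, Quat)` is monogenic on the interior of `K`. -/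
def MonogenicOnInterior (K : Set R3) (f : C(K, Quat)) : Prop :=
  MonogenicOn (extendK K f) (interior K)

/-- `w` lies in the real plane `ℝ·1 + ℝ·q`. -/
def InPlane (q w : Quat) : Prop := ∃ a b : ℝ, w = a • 1 + b • q

/-- Plane-spinor fields on `K`. -/
def IsPlaneSpinor (K : Set R3) (f : C(K, Quat)) : Prop :=
  ∃ q : Quat, q ^ 2 = -1 ∧ (∀ x, InPlane q (f x)) ∧ MonogenicOnInterior K f

/-- Spin characters of `K`. -/
structure IsSpinCharacter (K : Set R3) (δ : C(K, Quat) → Quat) : Prop where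
  continuous : Continuous δ
  map_add : ∀ f g : C(K, Quat), δ (f + g) = δ f + δ g
  map_smul_right : ∀ (f : C(K, Quat)) (a : Quat), δ (f * ContinuousMap.const _ a) = δ f * a
  map_one : δ 1 = 1
  grade_real : ∀ f : C(K, Quat), (∀ x, ∃ a : ℝ, f x = (a : ℝ) • 1) → ∃ a : ℝ, δ f = (a : ℝ) • 1
  grade_imaginary : ∀ f : C(K, Quat), (∀ x, (f x).re = 0) → (δ f).re = 0
  map_list_prod : ∀ L : List C(K, Quat), (∀ f ∈ L, IsPlaneSpinor K f) →
    δ L.prod = (L.map δ).prod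

/-- The monogenic spinor fields 𝓜⁺(K): the closure in `C(K, Quat)` of restrictions of
functions monogenic on an open neighborhood of `K`. -/
def MonSpinorFields (K : Set R3) : Set C(K, Quat) :=
  closure { f : C(K, Quat) | ∃ U : Set R3, ∃ F : R3 → Quat,
    IsOpen U ∧ K ⊆ U ∧ MonogenicOn F U ∧ ∀ x : K, f x = F x }

/-- A compact region in ℝ³. -/
def IsCompactRegion (K : Set R3) : Prop :=
  K.Nonempty ∧ IsCompact K ∧ K = closure (interior K) ∧ IsConnected Kᶜ



/-- The plane-spinor fields on `K` with values in the plane `ℝ·1 + ℝ·q`. -/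
def planeSpinorsWith (K : Set R3) (q : Quat) : Set C(K, Quat) :=
  { f | (∀ x, InPlane q (f x)) ∧ MonogenicOnInterior K f }


lemma coe_eq_smul_one (r : ℝ) : (r : Quat) = r • (1 : Quat) := by
  rw [← Quaternion.algebraMap_def, Algebra.algebraMap_eq_smul_one]

lemma re_eq_zero_of_sq_neg_one (q : Quat) (hq : q ^ 2 = -1) : q.re = 0 := by
  rw [sq] at hq
  have h0 : q.re * q.re - q.imI * q.imI - q.imJ * q.imJ - q.imK * q.imK = -1 := by
    have := congrArg QuaternionAlgebra.re hq
    simpa [Quaternion.re_mul, Quaternion.re_one] using this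
  have h1 : q.re * q.imI + q.imI * q.re + q.imJ * q.imK - q.imK * q.imJ = 0 := by
    have := congrArg QuaternionAlgebra.imI hq
    simpa [Quaternion.imI_mul, Quaternion.imI_one] using this
  have h2 : q.re * q.imJ - q.imI * q.imK + q.imJ * q.re + q.imK * q.imI = 0 := by
    have := congrArg QuaternionAlgebra.imJ hq
    simpa [Quaternion.imJ_mul, Quaternion.imJ_one] using this
  have h3 : q.re * q.imK + q.imI * q.imJ - q.imJ * q.imI + q.imK * q.re = 0 := by
    have := congrArg QuaternionAlgebra.imK hq
    simpa [Quaternion.imK_mul, Quaternion.imK_one] using this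
  have key : q.re * (q.re ^ 2 + 1) = 0 := by
    linear_combination q.re * h0 + (q.imI / 2) * h1 + (q.imJ / 2) * h2 + (q.imK / 2) * h3
  have hpos : q.re ^ 2 + 1 ≠ 0 := by positivity
  exact (mul_eq_zero.mp key).resolve_right hpos

lemma delta_const {K : Set R3} {δ : C(K, Quat) → Quat} (hδ : IsSpinCharacter K δ)
    (w : Quat) : δ (ContinuousMap.const _ w) = w := by
  have h : (ContinuousMap.const (↥K) w) = 1 * ContinuousMap.const (↥K) w := (one_mul _).symm
  rw [h, hδ.map_smul_right, hδ.map_one, one_mul]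

/-- A spin character maps each subsurface spinor algebra `𝒜_q(K)` onto the plane
`ℝ·1 + ℝ·q`. -/
theorem character_maps_plane_spinors_onto_plane (K : Set R3) (hne : K.Nonempty)
    (hc : IsCompact K) (hreg : K = closure (interior K))
    (δ : C(K, Quat) → Quat) (hδ : IsSpinCharacter K δ) (q : Quat) (hq : q ^ 2 = -1) :
    δ '' planeSpinorsWith K q = { w : Quat | InPlane q w } := by
  have hqre : q.re = 0 := re_eq_zero_of_sq_neg_one q hq
  have hqq : q * -q = 1 := by rw [mul_neg, ← sq, hq, neg_neg]
  apply Set.Subset.antisymm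
  · rintro w ⟨f, ⟨hplane, hmono⟩, rfl⟩
    set g : C(K, Quat) := ⟨fun x => ((f x).re : Quat),
      Quaternion.continuous_coe.comp (Quaternion.continuous_re.comp f.continuous)⟩ with hg
    set h : C(K, Quat) := ⟨fun x => (f x - ((f x).re : Quat)) * (-q),
      ((f.continuous.sub (Quaternion.continuous_coe.comp
        (Quaternion.continuous_re.comp f.continuous))).mul continuous_const)⟩ with hh
    have hxab : ∀ x, ∃ a b : ℝ, f x = a • 1 + b • q ∧ g x = a • (1 : Quat) ∧
        h x = b • (1 : Quat) := by
      intro x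
      obtain ⟨a, b, hab⟩ := hplane x
      refine ⟨a, b, hab, ?_, ?_⟩
      · show ((f x).re : Quat) = a • 1
        have : (f x).re = a := by
          rw [hab]; simp [hqre, Quaternion.re_one]
        rw [this, coe_eq_smul_one]
      · show (f x - ((f x).re : Quat)) * (-q) = b • 1
        have hre : (f x).re = a := by rw [hab]; simp [hqre, Quaternion.re_one]
        rw [hre, hab, coe_eq_smul_one]
        rw [add_sub_cancel_left, smul_mul_assoc, hqq]
    have hfgh : f = g + h * ContinuousMap.const _ q := by
      apply ContinuousMap.ext; intro x
      obtain ⟨a, b, hab, hga, hhb⟩ := hxab x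
      simp only [ContinuousMap.add_apply, ContinuousMap.mul_apply, ContinuousMap.const_apply]
      rw [hab, hga, hhb, smul_mul_assoc, one_mul]
    obtain ⟨a, ha⟩ := hδ.grade_real g (fun x => by
      obtain ⟨a, b, _, hga, _⟩ := hxab x; exact ⟨a, hga⟩)
    obtain ⟨b, hb⟩ := hδ.grade_real h (fun x => by
      obtain ⟨a2, b2, _, _, hhb⟩ := hxab x; exact ⟨b2, hhb⟩)
    have : δ f = a • 1 + b • q := by
      rw [hfgh, hδ.map_add, hδ.map_smul_right, ha, hb, smul_mul_assoc, one_mul]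
    exact ⟨a, b, this⟩
  · rintro w hw
    refine ⟨ContinuousMap.const _ w, ⟨?_, ?_⟩, delta_const hδ w⟩
    · intro x; exact hw
    · intro x hx
      have hev : extendK K (ContinuousMap.const _ w) =ᶠ[nhds x] fun _ => w := by
        filter_upwards [isOpen_interior.mem_nhds hx] with y hy
        simp [extendK, interior_subset hy]
      constructor
      · exact (differentiableAt_const w).congr_of_eventuallyEq hev
      · rw [hev.fderiv_eq, fderiv_fun_const]
        simp

end
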